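/- A Leibniz algebra $(\mathcal{E},[\cdot,\cdot])$ admits a product structure $E$ if and only if $\mathcal{E}$ decomposes as a direct sum of vector spaces $\mathcal{E}=\mathcal{E}_+\oplus\mathcal{E}_-$, where $\mathcal{E}_+$ and $\mathcal{E}_-$ are Leibniz subalgebras (the eigenspaces of $E$ for eigenvalues $+1$ and $-1$). -/

import Mathlib

/-- A Leibniz algebra admits a product structure iff it decomposes as a direct
sum of two subalgebras. -/
theorem stmt8 {K E : Type*} [Field K] [CharZero K] [AddCommGroup E] [Module K E]
    (br : E →ₗ[K] E →ₗ[K] E)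
    (hbr : ∀ x y z : E, br x (br y z) = br (br x y) z + br y (br x z)) :
    (∃ P : Module.End K E, P * P = 1 ∧
      ∀ x y : E, P (br x y) = br (P x) y + br x (P y) - P (br (P x) (P y)))
    ↔ ∃ p q : Submodule K E, IsCompl p q ∧
        (∀ x ∈ p, ∀ y ∈ p, br x y ∈ p) ∧ (∀ x ∈ q, ∀ y ∈ q, br x y ∈ q) := by
  constructor
  · rintro ⟨P, hP2, hint⟩
    have hPP : ∀ x : E, P (P x) = x := by
      intro x
      have := congrArg (fun f : Module.End K E => f x) hP2
      simpa [Module.End.mul_apply] using this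
    refine ⟨LinearMap.ker (P - 1), LinearMap.ker (P + 1), ⟨?_, ?_⟩, ?_, ?_⟩
    · rw [disjoint_iff]
      ext x
      simp only [Submodule.mem_inf, LinearMap.mem_ker, Submodule.mem_bot,
        LinearMap.sub_apply, LinearMap.add_apply, Module.End.one_apply,
        sub_eq_zero, add_eq_zero_iff_eq_neg]
      constructor
      · rintro ⟨h1, h2⟩
        have : x = -x := h1.symm.trans h2
        have h2x : (2 : K) • x = 0 := by
          rw [two_smul]
          exact add_eq_zero_iff_eq_neg.mpr this
        have := smul_eq_zero.mp h2x
        simpa using this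
      · rintro rfl; simp
    · rw [codisjoint_iff, eq_top_iff]
      intro x _
      have hx : x = (2 : K)⁻¹ • (x + P x) + (2 : K)⁻¹ • (x - P x) := by
        rw [← smul_add]
        have : x + P x + (x - P x) = (2 : K) • x := by rw [two_smul]; abel
        rw [this, smul_smul, inv_mul_cancel₀ (two_ne_zero), one_smul]
      rw [hx]
      refine Submodule.add_mem_sup ?_ ?_
      · rw [LinearMap.mem_ker]
        simp only [LinearMap.sub_apply, Module.End.one_apply, map_smul, map_add, hPP]
        module
      · rw [LinearMap.mem_ker]
        simp only [LinearMap.add_apply, Module.End.one_apply, map_smul, map_sub, hPP]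
        module
    · intro x hx y hy
      rw [LinearMap.mem_ker, LinearMap.sub_apply, Module.End.one_apply, sub_eq_zero] at *
      have h := hint x y
      rw [hx, hy] at h
      rw [eq_sub_iff_add_eq] at h
      have h2 : (2 : K) • P (br x y) = (2 : K) • br x y := by
        rw [two_smul, two_smul]; exact h
      exact smul_right_injective E two_ne_zero h2
    · intro x hx y hy
      rw [LinearMap.mem_ker, LinearMap.add_apply, Module.End.one_apply,
        add_eq_zero_iff_eq_neg] at *
      have h := hint x y
      rw [hx, hy] at h
      simp only [map_neg, LinearMap.neg_apply, neg_neg] at h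
      rw [eq_sub_iff_add_eq] at h
      have h2 : (2 : K) • P (br x y) = (2 : K) • (-br x y) := by
        rw [two_smul, two_smul]; exact h
      exact smul_right_injective E two_ne_zero h2
  · rintro ⟨p, q, hc, hp, hq⟩
    set π : E →ₗ[K] E := p.subtype.comp (p.projectionOnto q hc) with hπ
    set P : Module.End K E := 2 • π - 1 with hP
    have hPp : ∀ a ∈ p, P a = a := by
      intro a ha
      have h1 : π a = a := by
        have := Submodule.projectionOnto_apply_left hc ⟨a, ha⟩
        simpa [hπ] using congrArg (Submodule.subtype p) this
      simp [hP, LinearMap.sub_apply, LinearMap.smul_apply, h1, two_smul]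
    have hPq : ∀ b ∈ q, P b = -b := by
      intro b hb
      have h1 : π b = 0 := by
        have := Submodule.projectionOnto_apply_right hc ⟨b, hb⟩
        simpa [hπ] using congrArg (Submodule.subtype p) this
      simp [hP, LinearMap.sub_apply, LinearMap.smul_apply, h1]
    have hdecomp : ∀ x : E, ∃ a ∈ p, ∃ b ∈ q, x = a + b := by
      intro x
      have hx : x ∈ p ⊔ q := by rw [hc.sup_eq_top]; trivial
      obtain ⟨a, ha, b, hb, h⟩ := Submodule.mem_sup.mp hx
      exact ⟨a, ha, b, hb, h.symm⟩
    refine ⟨P, ?_, ?_⟩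
    · ext x
      obtain ⟨a, ha, b, hb, rfl⟩ := hdecomp x
      simp only [Module.End.mul_apply, Module.End.one_apply, map_add,
        hPp a ha, hPq b hb, map_neg, hPq b hb]
      simp
    · intro x y
      obtain ⟨a, ha, b, hb, rfl⟩ := hdecomp x
      obtain ⟨c, hcc, d, hd, rfl⟩ := hdecomp y
      have hac := hPp _ (hp a ha c hcc)
      have hbd := hPq _ (hq b hb d hd)
      simp only [map_add, LinearMap.add_apply, hPp a ha, hPq b hb,
        hPp c hcc, hPq d hd, map_neg, LinearMap.neg_apply, hac, hbd, map_sub,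
        LinearMap.sub_apply]
      abel
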